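/- If d = deg gcd(f(x), φ(x)) and r = min{m, n−d}, then the first r columns f, Hf, …, H^{r-1}f of H*(f)_{n×m} are linearly independent. -/
import Mathlib


open Polynomial Matrix

/-- The rotation matrix `H_φ` of a monic polynomial
`φ(x) = xⁿ − φ_{n-1}x^{n-1} − ⋯ − φ₁x − φ₀` (note `φᵢ = -(coeff φ i)` for `i < n`). -/
def rotMat (n : ℕ) (φ : Polynomial ℂ) : Matrix (Fin n) (Fin n) ℂ :=
  Matrix.of fun i j =>
    if (j : ℕ) + 1 < n then (if (i : ℕ) = (j : ℕ) + 1 then 1 else 0)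
    else -φ.coeff (i : ℕ)

/-- The `n × m` generalized ideal matrix `H*(f) = [f, Hf, H²f, …, H^{m-1}f]`. -/
noncomputable def genIdealMat (n m : ℕ) (H : Matrix (Fin n) (Fin n) ℂ) (f : Fin n → ℂ) :
    Matrix (Fin n) (Fin m) ℂ :=
  Matrix.of fun i j => (H ^ (j : ℕ)).mulVec f i

/-- The polynomial `f(x) = Σ_{j=0}^{n-1} fⱼ xʲ` associated to a vector `f`. -/
noncomputable def vecPoly (n : ℕ) (f : Fin n → ℂ) : Polynomial ℂ :=
  ∑ j : Fin n, Polynomial.C (f j) * Polynomial.X ^ (j : ℕ)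

lemma vecPoly_coeff (n : ℕ) (f : Fin n → ℂ) (k : ℕ) :
    (vecPoly n f).coeff k = if h : k < n then f ⟨k, h⟩ else 0 := by
  unfold vecPoly
  rw [finset_sum_coeff]
  simp only [coeff_C_mul, coeff_X_pow]
  split
  · next h =>
    rw [Finset.sum_eq_single (⟨k, h⟩ : Fin n)]
    · simp
    · intro b _ hb
      simp only [mul_ite, mul_one, mul_zero, ite_eq_right_iff]
      intro he
      exact absurd (Fin.ext he.symm) hb
    · simp
  · next h =>
    apply Finset.sum_eq_zero
    intro b _
    have hne : k ≠ (b : ℕ) := by omega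
    simp [hne]

lemma vecPoly_natDegree_lt (n : ℕ) (f : Fin n → ℂ) (h : vecPoly n f ≠ 0) :
    (vecPoly n f).natDegree < n := by
  by_contra hc
  push_neg at hc
  have := vecPoly_coeff n f (vecPoly n f).natDegree
  rw [dif_neg (by omega)] at this
  exact h (leadingCoeff_eq_zero.mp this)

lemma vecPoly_smul (n : ℕ) (c : ℂ) (w : Fin n → ℂ) :
    vecPoly n (c • w) = C c * vecPoly n w := by
  unfold vecPoly
  rw [Finset.mul_sum]
  apply Finset.sum_congr rfl
  intro j _
  simp [C_mul, mul_assoc]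

lemma vecPoly_sum (n : ℕ) {ι : Type*} (s : Finset ι) (w : ι → Fin n → ℂ) :
    vecPoly n (∑ j ∈ s, w j) = ∑ j ∈ s, vecPoly n (w j) := by
  unfold vecPoly
  have key : ∀ i : Fin n, C ((∑ j ∈ s, w j) i) * X ^ (i : ℕ)
      = ∑ j ∈ s, C (w j i) * X ^ (i : ℕ) := by
    intro i
    rw [Finset.sum_apply, map_sum, Finset.sum_mul]
  rw [Finset.sum_congr rfl (fun i _ => key i), Finset.sum_comm]

lemma rotMat_mulVec_apply (n : ℕ) (hn : 0 < n) (φ : Polynomial ℂ) (v : Fin n → ℂ) (i : Fin n) :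
    (rotMat n φ).mulVec v i =
      (if h : 0 < (i : ℕ) then v ⟨(i : ℕ) - 1, by omega⟩ else 0)
        - φ.coeff (i : ℕ) * v ⟨n - 1, by omega⟩ := by
  unfold rotMat
  rw [Matrix.mulVec, dotProduct]
  have key : ∀ j : Fin n,
      (Matrix.of fun i j : Fin n =>
        if (j : ℕ) + 1 < n then (if (i : ℕ) = (j : ℕ) + 1 then 1 else 0)
        else -φ.coeff (i : ℕ)) i j * v j
      = (if (i : ℕ) = (j : ℕ) + 1 then v j else 0)
        + (if j = (⟨n - 1, by omega⟩ : Fin n) then -φ.coeff (i : ℕ) * v j else 0) := by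
    intro j
    have hj : (j : ℕ) < n := j.2
    by_cases h : (j : ℕ) + 1 < n
    · have hne : j ≠ (⟨n - 1, by omega⟩ : Fin n) := by
        intro he; apply absurd (congrArg Fin.val he); simp; omega
      simp only [Matrix.of_apply, if_pos h, if_neg hne, add_zero]
      split <;> simp
    · have hi : ¬ ((i : ℕ) = (j : ℕ) + 1) := by have := i.2; omega
      have hje : j = (⟨n - 1, by omega⟩ : Fin n) := by
        apply Fin.ext; simp; omega
      simp only [Matrix.of_apply, if_neg h, if_pos hje, if_neg hi, zero_add]
  rw [Finset.sum_congr rfl (fun j _ => key j), Finset.sum_add_distrib]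
  have hS2 : (∑ j : Fin n, if j = (⟨n - 1, by omega⟩ : Fin n)
      then -φ.coeff (i : ℕ) * v j else 0) = -φ.coeff (i : ℕ) * v ⟨n - 1, by omega⟩ := by
    rw [Finset.sum_ite_eq']
    simp
  have hS1 : (∑ j : Fin n, if (i : ℕ) = (j : ℕ) + 1 then v j else 0)
      = (if h : 0 < (i : ℕ) then v ⟨(i : ℕ) - 1, by omega⟩ else 0) := by
    by_cases h : 0 < (i : ℕ)
    · rw [dif_pos h, Finset.sum_eq_single (⟨(i : ℕ) - 1, by omega⟩ : Fin n)]
      · have hc : (i : ℕ) = ((⟨(i : ℕ) - 1, by omega⟩ : Fin n) : ℕ) + 1 := by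
          simp; omega
        rw [if_pos hc]
      · intro b _ hb
        rw [if_neg (fun he => hb (Fin.ext (by simp only [Fin.val_mk]; omega)))]
      · simp
    · rw [dif_neg h]
      apply Finset.sum_eq_zero
      intro b _
      rw [if_neg (by omega)]
  rw [hS1, hS2]
  ring

lemma rotMat_mulVec_poly (n : ℕ) (hn : 0 < n) (φ : Polynomial ℂ) (hmonic : φ.Monic)
    (hdeg : φ.natDegree = n) (v : Fin n → ℂ) :
    vecPoly n ((rotMat n φ).mulVec v) =
      X * vecPoly n v - C (v ⟨n - 1, by omega⟩) * φ := by
  ext k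
  rw [coeff_sub, coeff_C_mul, vecPoly_coeff]
  cases k with
  | zero =>
    rw [mul_coeff_zero, coeff_X_zero, zero_mul]
    rw [dif_pos hn, rotMat_mulVec_apply n hn, dif_neg (by simp)]
    ring
  | succ k =>
    rw [coeff_X_mul, vecPoly_coeff]
    by_cases h : k + 1 < n
    · rw [dif_pos h, dif_pos (by omega), rotMat_mulVec_apply n hn,
        dif_pos (by simp)]
      simp [mul_comm]
    · rw [dif_neg h]
      by_cases h2 : k + 1 = n
      · rw [dif_pos (by omega)]
        have hc1 : φ.coeff (k + 1) = 1 := by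
          rw [h2, ← hdeg]; exact hmonic.coeff_natDegree
        rw [hc1, mul_one]
        have he : (⟨k, by omega⟩ : Fin n) = ⟨n - 1, by omega⟩ := Fin.ext (by simp; omega)
        rw [he]; ring
      · rw [dif_neg (by omega)]
        have hc0 : φ.coeff (k + 1) = 0 := coeff_eq_zero_of_natDegree_lt (by omega)
        rw [hc0]; ring

lemma vecPoly_pow_dvd (n : ℕ) (hn : 0 < n) (φ : Polynomial ℂ) (hmonic : φ.Monic)
    (hdeg : φ.natDegree = n) (f : Fin n → ℂ) (j : ℕ) :
    φ ∣ vecPoly n ((rotMat n φ ^ j).mulVec f) - X ^ j * vecPoly n f := by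
  induction j with
  | zero => simp
  | succ j ih =>
    rw [pow_succ', ← Matrix.mulVec_mulVec, rotMat_mulVec_poly n hn φ hmonic hdeg]
    obtain ⟨c, hc⟩ := ih
    refine ⟨X * c - C (((rotMat n φ ^ j).mulVec f) ⟨n - 1, by omega⟩), ?_⟩
    have hstep : X * vecPoly n ((rotMat n φ ^ j).mulVec f)
        = X * (X ^ j * vecPoly n f) + X * (φ * c) := by
      rw [← mul_add, ← hc]; ring
    rw [hstep]; ring


/-- If `d = deg gcd(f(x), φ(x))` and `r = min {m, n − d}` (with `r ≤ m`), then the first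
`r` columns `f, Hf, …, H^{r-1}f` of `H*(f)_{n×m}` are linearly independent. -/
theorem genIdealMat_first_columns_linearIndependent (n m : ℕ) (hn : 0 < n)
    (φ : Polynomial ℂ) (hmonic : φ.Monic) (hdeg : φ.natDegree = n) (h0 : φ.coeff 0 ≠ 0)
    (hsqfree : Squarefree φ) (f : Fin n → ℂ)
    (r : ℕ) (hr : r = min m (n - (EuclideanDomain.gcd (vecPoly n f) φ).natDegree))
    (hrm : r ≤ m) :
    LinearIndependent ℂ (fun j : Fin r => (rotMat n φ ^ (j : ℕ)).mulVec f) := by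
  set F := vecPoly n f with hF
  set G := EuclideanDomain.gcd F φ with hG
  have hφ0 : φ ≠ 0 := hmonic.ne_zero
  have hG0 : G ≠ 0 := by
    intro h
    exact hφ0 ((EuclideanDomain.gcd_eq_zero_iff).mp h).2
  have hGdvd : G ∣ φ := EuclideanDomain.gcd_dvd_right F φ
  set ψ := φ / G with hψ
  have hφeq : G * ψ = φ := EuclideanDomain.mul_div_cancel' hG0 hGdvd
  have hψdvd : ψ ∣ φ := ⟨G, by rw [← hφeq]; ring⟩
  have hψ0 : ψ ≠ 0 := by
    intro h; rw [h, mul_zero] at hφeq; exact hφ0 hφeq.symm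
  have hψdeg : ψ.natDegree = n - G.natDegree := by
    have := natDegree_mul hG0 hψ0
    rw [hφeq, hdeg] at this
    omega
  have hcop : IsCoprime ψ F := by
    rw [← EuclideanDomain.gcd_isUnit_iff]
    apply hsqfree
    calc EuclideanDomain.gcd ψ F * EuclideanDomain.gcd ψ F
        ∣ G * ψ := mul_dvd_mul
          (EuclideanDomain.dvd_gcd (EuclideanDomain.gcd_dvd_right ψ F)
            ((EuclideanDomain.gcd_dvd_left ψ F).trans hψdvd))
          (EuclideanDomain.gcd_dvd_left ψ F)
      _ = φ := hφeq
  rw [Fintype.linearIndependent_iff]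
  intro a ha
  set g : Polynomial ℂ := vecPoly r a with hg
  have hdvd : φ ∣ g * F := by
    have h1 : φ ∣ ∑ j : Fin r, C (a j) *
        (vecPoly n ((rotMat n φ ^ (j : ℕ)).mulVec f) - X ^ (j : ℕ) * F) := by
      apply Finset.dvd_sum
      intro j _
      exact Dvd.dvd.mul_left (vecPoly_pow_dvd n hn φ hmonic hdeg f j) _
    have h2 : ∑ j : Fin r, C (a j) * vecPoly n ((rotMat n φ ^ (j : ℕ)).mulVec f) = 0 := by
      have h := congrArg (vecPoly n) ha
      rw [vecPoly_sum] at h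
      simp only [vecPoly_smul] at h
      rw [show vecPoly n (0 : Fin n → ℂ) = 0 by simp [vecPoly]] at h
      exact h
    have h3 : ∑ j : Fin r, C (a j) * (X ^ (j : ℕ) * F) = g * F := by
      rw [hg]
      unfold vecPoly
      rw [Finset.sum_mul]
      apply Finset.sum_congr rfl
      intro j _
      ring
    have h4 : ∑ j : Fin r, C (a j) *
        (vecPoly n ((rotMat n φ ^ (j : ℕ)).mulVec f) - X ^ (j : ℕ) * F)
        = 0 - g * F := by
      rw [← h2, ← h3, ← Finset.sum_sub_distrib]
      apply Finset.sum_congr rfl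
      intro j _
      ring
    rw [h4, zero_sub] at h1
    exact (dvd_neg).mp h1
  have hψg : ψ ∣ g := hcop.dvd_of_dvd_mul_right (hψdvd.trans hdvd)
  have hgz : g = 0 := by
    by_contra hgz
    have h1 : ψ.natDegree ≤ g.natDegree := Polynomial.natDegree_le_of_dvd hψg hgz
    have h2 : g.natDegree < r := vecPoly_natDegree_lt r a hgz
    omega
  intro i
  have := vecPoly_coeff r a i
  rw [← hg, hgz, coeff_zero, dif_pos i.2] at this
  exact this.symm
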